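/- arXiv:1905.07218 — 5 statements merged into one kernel-verified Lean document; each statement's English description precedes it below -/
import Mathlib

section
/- Let (Ω, 𝔉, P) be a probability space, H a real Hilbert space, and N a positive integer. Let Y = (Y_1, …, Y_N) be a centered square-integrable random vector in ℝ^N whose covariance matrix M (with M_{ij} = E[Y_i Y_j]) is invertible. For a centered Bochner square-integrable H-valued random variable X, define the best linear unbiased predictor Π(X|Y) = Σ_{i,j=1}^N (M^{-1})_{ij} Y_i · E[Y_j X] (an H-valued random variable, where E[Y_j X] is a Bochner integral). Let (X_t)_{t∈ℤ} be centered square-integrable H-valued random variables with sup_t E‖X_t‖² < ∞, let (𝓑_k)_{k∈ℤ} be continuous linear functionals on H with Σ_{k∈ℤ} ‖𝓑_k‖ < ∞, let e be a centered square-integrable real random variable independent of Y, and set Z = Σ_{k∈ℤ} 𝓑_k(X_{s−k}) + e for a fixed s ∈ ℤ (the series converges absolutely almost surely and in L¹). Then, almost surely, Π(Z|Y) = Σ_{k∈ℤ} 𝓑_k( Π(X_{s−k}|Y) ), where Π(Z|Y) = Σ_{i,j} (M^{-1})_{ij} Y_i E[Y_j Z]. -/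
open MeasureTheory ProbabilityTheory
open scoped ENNReal NNReal

/-- The best linear unbiased predictor of a centered square-integrable `H`-valued
random variable `X` given the centered random vector `Y`, with `Minv` the inverse
of the covariance matrix of `Y`:
`Π(X|Y) = Σ_{i,j} (M⁻¹)_{ij} Y_i • E[Y_j • X]`. -/
noncomputable def blup {Ω : Type*} [MeasureSpace Ω] {N : ℕ}
    (Y : Fin N → Ω → ℝ) (Minv : Matrix (Fin N) (Fin N) ℝ)
    {H : Type*} [NormedAddCommGroup H] [NormedSpace ℝ H]
    (X : Ω → H) : Ω → H :=
  fun ω => ∑ i : Fin N, ∑ j : Fin N,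
    (Minv i j * Y i ω) • (∫ ω', Y j ω' • X ω')

/-- A series of integrable real functions with summable integral norms has integrable sum. -/
lemma integrable_tsum_of_summable_integral_norm'
    {α : Type*} [MeasurableSpace α] {μ : Measure α}
    {ι : Type*} [Countable ι] {F : ι → α → ℝ}
    (hF_int : ∀ i, Integrable (F i) μ)
    (hF_sum : Summable fun i => ∫ a, ‖F i a‖ ∂μ) :
    Integrable (fun a => ∑' i, F i a) μ := by
  have hmeas : ∀ i, AEMeasurable (fun a => (‖F i a‖₊ : ℝ≥0∞)) μ :=
    fun i => (hF_int i).aestronglyMeasurable.enorm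
  have hlint : ∑' i, ∫⁻ a, (‖F i a‖₊ : ℝ≥0∞) ∂μ ≠ ⊤ := by
    have h1 : ∀ i, ∫⁻ a, (‖F i a‖₊ : ℝ≥0∞) ∂μ = ENNReal.ofReal (∫ a, ‖F i a‖ ∂μ) := fun i =>
      (ofReal_integral_norm_eq_lintegral_enorm (hF_int i)).symm
    rw [funext h1, ← ENNReal.ofReal_tsum_of_nonneg
      (fun i => integral_nonneg fun a => norm_nonneg _) hF_sum]
    exact ENNReal.ofReal_ne_top
  rw [← lintegral_tsum hmeas] at hlint
  have hhh : ∀ᵐ a ∂μ, Summable fun i => ‖F i a‖ := by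
    refine (ae_lt_top' (AEMeasurable.ennreal_tsum hmeas) hlint).mono fun a ha => ?_
    have h2 := ENNReal.tsum_coe_ne_top_iff_summable_coe.mp ha.ne
    simpa [coe_nnnorm] using h2
  constructor
  · refine aestronglyMeasurable_of_tendsto_ae (Filter.atTop : Filter (Finset ι))
      (f := fun (t : Finset ι) a => ∑ i ∈ t, F i a)
      (fun t => t.aestronglyMeasurable_fun_sum fun i _ => (hF_int i).aestronglyMeasurable) ?_
    filter_upwards [hhh] with a ha
    exact ha.of_norm.hasSum
  · refine lt_of_le_of_lt (lintegral_mono_ae ?_) hlint.lt_top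
    filter_upwards [hhh] with a ha
    calc (‖∑' i, F i a‖₊ : ℝ≥0∞) = ENNReal.ofReal ‖∑' i, F i a‖ :=
          (ofReal_norm _).symm
      _ ≤ ENNReal.ofReal (∑' i, ‖F i a‖) :=
          ENNReal.ofReal_le_ofReal (norm_tsum_le_tsum_norm ha)
      _ = ∑' i, ENNReal.ofReal ‖F i a‖ :=
          ENNReal.ofReal_tsum_of_nonneg (fun i => norm_nonneg _) ha
      _ = ∑' i, (‖F i a‖₊ : ℝ≥0∞) := tsum_congr fun i => ofReal_norm (F i a)

/-- Proposition 2.1: the BLUP of the response of the lagged regression given the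
observations equals the filter applied to the BLUPs of the latent regressors. -/
theorem blup_lagged_regression
    {Ω : Type*} [MeasureSpace Ω] [IsProbabilityMeasure (volume : Measure Ω)]
    {H : Type*} [NormedAddCommGroup H] [InnerProductSpace ℝ H] [CompleteSpace H]
    {N : ℕ} (hN : 0 < N)
    (Y : Fin N → Ω → ℝ)
    (hY2 : ∀ i, MemLp (Y i) 2)
    (hYcent : ∀ i, (∫ ω, Y i ω) = 0)
    (M : Matrix (Fin N) (Fin N) ℝ)
    (hM : ∀ i j, M i j = ∫ ω, Y i ω * Y j ω)
    (hMunit : IsUnit M)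
    (X : ℤ → Ω → H)
    (hX2 : ∀ t, MemLp (X t) 2)
    (hXcent : ∀ t, (∫ ω, X t ω) = 0)
    (hXbdd : ∃ C : ℝ, ∀ t, (∫ ω, ‖X t ω‖ ^ 2) ≤ C)
    (B : ℤ → H →L[ℝ] ℝ)
    (hB : Summable fun k => ‖B k‖)
    (e : Ω → ℝ)
    (he2 : MemLp e 2)
    (hecent : (∫ ω, e ω) = 0)
    (hindep : IndepFun e (fun ω i => Y i ω) volume)
    (s : ℤ)
    (Z : Ω → ℝ)
    (hZ : ∀ ω, Z ω = (∑' k : ℤ, B k (X (s - k) ω)) + e ω) :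
    ∀ᵐ ω ∂(volume : Measure Ω),
      blup Y M⁻¹ Z ω = ∑' k : ℤ, B k (blup Y M⁻¹ (X (s - k)) ω) := by
  obtain ⟨C, hC⟩ := hXbdd
  -- exponent arithmetic for Memℒp.smul
  have hexp : (1 : ℝ≥0∞) / 1 = 1 / 2 + 1 / 2 := by
    rw [ENNReal.div_add_div_same, one_add_one_eq_two,
      ENNReal.div_self two_ne_zero ENNReal.ofNat_ne_top, one_div_one]
  -- integrability of Y j • X t
  have hYX_int : ∀ (j : Fin N) (t : ℤ), Integrable (fun ω => Y j ω • X t ω) := by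
    intro j t
    have := ((hX2 t).smul (hY2 j) : MemLp (Y j • X t) 1)
    exact (memLp_one_iff_integrable).mp this
  -- the mean vectors
  set m : Fin N → ℤ → H := fun j k => ∫ ω, Y j ω • X (s - k) ω with hm
  set D : Fin N → ℝ := fun j => ((∫ ω, Y j ω ^ 2) + C) / 2 with hD
  -- basic bound on ∫ |Y j| ‖X t‖
  have hbound : ∀ (j : Fin N) (t : ℤ), (∫ ω, |Y j ω| * ‖X t ω‖) ≤ D j := by
    intro j t
    have int1 : Integrable (fun ω => |Y j ω| * ‖X t ω‖) := by
      have := (hYX_int j t).norm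
      refine this.congr ?_
      filter_upwards with ω
      rw [norm_smul, Real.norm_eq_abs]
    have int2 : Integrable (fun ω => (Y j ω ^ 2 + ‖X t ω‖ ^ 2) / 2) :=
      ((hY2 j).integrable_sq.add ((hX2 t).norm.integrable_sq)).div_const 2
    have h1 : (∫ ω, |Y j ω| * ‖X t ω‖) ≤ ∫ ω, (Y j ω ^ 2 + ‖X t ω‖ ^ 2) / 2 := by
      refine integral_mono int1 int2 fun ω => ?_
      have h := abs_nonneg (Y j ω)
      have h' := norm_nonneg (X t ω)
      nlinarith [sq_nonneg (|Y j ω| - ‖X t ω‖), sq_abs (Y j ω)]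
    have h2 : (∫ ω, (Y j ω ^ 2 + ‖X t ω‖ ^ 2) / 2)
        = ((∫ ω, Y j ω ^ 2) + ∫ ω, ‖X t ω‖ ^ 2) / 2 := by
      rw [integral_div, integral_add (hY2 j).integrable_sq ((hX2 t).norm.integrable_sq)]
    have h3 : ((∫ ω, Y j ω ^ 2) + ∫ ω, ‖X t ω‖ ^ 2) / 2 ≤ D j := by
      have := hC t
      simp only [hD]
      linarith
    linarith
  -- bound on ‖m j k‖
  have hmnorm : ∀ (j : Fin N) (k : ℤ), ‖m j k‖ ≤ D j := by
    intro j k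
    refine le_trans (norm_integral_le_integral_norm _) ?_
    refine le_trans (le_of_eq (integral_congr_ae ?_)) (hbound j (s - k))
    filter_upwards with ω
    rw [norm_smul, Real.norm_eq_abs]
  -- integrability of F j k := fun ω => Y j ω * B k (X (s-k) ω)
  have hFint : ∀ (j : Fin N) (k : ℤ),
      Integrable (fun ω => Y j ω * B k (X (s - k) ω)) := by
    intro j k
    have := (B k).integrable_comp (hYX_int j (s - k))
    refine this.congr ?_
    filter_upwards with ω
    rw [_root_.map_smul, smul_eq_mul]
  -- integral norm bound for F j k
  have hFnorm : ∀ (j : Fin N) (k : ℤ),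
      (∫ ω, ‖Y j ω * B k (X (s - k) ω)‖) ≤ ‖B k‖ * D j := by
    intro j k
    have int1 : Integrable (fun ω => ‖Y j ω * B k (X (s - k) ω)‖) := (hFint j k).norm
    have int2 : Integrable (fun ω => ‖B k‖ * (|Y j ω| * ‖X (s - k) ω‖)) := by
      have := (hYX_int j (s - k)).norm
      refine (this.const_mul ‖B k‖).congr ?_
      filter_upwards with ω
      rw [norm_smul, Real.norm_eq_abs]
    have h1 : (∫ ω, ‖Y j ω * B k (X (s - k) ω)‖)
        ≤ ∫ ω, ‖B k‖ * (|Y j ω| * ‖X (s - k) ω‖) := by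
      refine integral_mono int1 int2 fun ω => ?_
      rw [norm_mul, Real.norm_eq_abs, Real.norm_eq_abs]
      have h2 : |B k (X (s - k) ω)| ≤ ‖B k‖ * ‖X (s - k) ω‖ := by
        simpa [Real.norm_eq_abs] using (B k).le_opNorm (X (s - k) ω)
      calc |Y j ω| * |B k (X (s - k) ω)| ≤ |Y j ω| * (‖B k‖ * ‖X (s - k) ω‖) :=
            mul_le_mul_of_nonneg_left h2 (abs_nonneg _)
        _ = ‖B k‖ * (|Y j ω| * ‖X (s - k) ω‖) := by ring
    have h2 : (∫ ω, ‖B k‖ * (|Y j ω| * ‖X (s - k) ω‖))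
        = ‖B k‖ * ∫ ω, |Y j ω| * ‖X (s - k) ω‖ := integral_const_mul _ _
    refine le_trans h1 (le_trans (le_of_eq h2) ?_)
    exact mul_le_mul_of_nonneg_left (hbound j (s - k)) (norm_nonneg _)
  -- summability of the integral norms
  have hFsum : ∀ j : Fin N, Summable fun k => ∫ ω, ‖Y j ω * B k (X (s - k) ω)‖ := by
    intro j
    refine Summable.of_nonneg_of_le (fun k => integral_nonneg fun ω => norm_nonneg _)
      (fun k => hFnorm j k) (hB.mul_right (D j))
  -- summability of k ↦ B k (m j k)
  have hsum : ∀ j : Fin N, Summable fun k => B k (m j k) := by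
    intro j
    refine Summable.of_norm (Summable.of_nonneg_of_le (fun k => norm_nonneg _)
      (fun k => ?_) (hB.mul_right (D j)))
    refine le_trans ((B k).le_opNorm _) ?_
    exact mul_le_mul_of_nonneg_left (hmnorm j k) (norm_nonneg _)
  -- ∫ F j k = B k (m j k)
  have hFeq : ∀ (j : Fin N) (k : ℤ),
      (∫ ω, Y j ω * B k (X (s - k) ω)) = B k (m j k) := by
    intro j k
    have h := (B k).integral_comp_comm (hYX_int j (s - k))
    rw [hm]
    rw [← h]
    refine integral_congr_ae ?_
    filter_upwards with ω
    rw [_root_.map_smul, smul_eq_mul]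
  -- ∫ Y j * e = 0
  have hYe_int : ∀ j : Fin N, Integrable (fun ω => Y j ω * e ω) := by
    intro j
    have := (he2.smul (hY2 j) : MemLp (Y j • e) 1)
    exact (memLp_one_iff_integrable).mp this
  have hYe_zero : ∀ j : Fin N, (∫ ω, Y j ω * e ω) = 0 := by
    intro j
    have hi : IndepFun (Y j) e :=
      (hindep.comp measurable_id (measurable_pi_apply j)).symm
    have := hi.integral_fun_mul_eq_mul_integral (hY2 j).aestronglyMeasurable he2.aestronglyMeasurable
    rw [this, hYcent j, zero_mul]
  -- the key identity for ∫ Y j • Z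
  have hkey : ∀ j : Fin N, (∫ ω, Y j ω • Z ω) = ∑' k, B k (m j k) := by
    intro j
    have hpt : ∀ ω, Y j ω • Z ω
        = (∑' k, Y j ω * B k (X (s - k) ω)) + Y j ω * e ω := by
      intro ω
      rw [hZ ω, smul_eq_mul, mul_add, tsum_mul_left]
    calc (∫ ω, Y j ω • Z ω)
        = ∫ ω, ((∑' k, Y j ω * B k (X (s - k) ω)) + Y j ω * e ω) := by
          exact integral_congr_ae (Filter.Eventually.of_forall hpt)
      _ = (∫ ω, ∑' k, Y j ω * B k (X (s - k) ω)) + ∫ ω, Y j ω * e ω :=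
          integral_add (integrable_tsum_of_summable_integral_norm'
            (fun k => hFint j k) (hFsum j)) (hYe_int j)
      _ = (∑' k, ∫ ω, Y j ω * B k (X (s - k) ω)) + 0 := by
          rw [hYe_zero j,
            ← integral_tsum_of_summable_integral_norm (fun k => hFint j k) (hFsum j)]
      _ = ∑' k, B k (m j k) := by
          rw [add_zero]
          exact tsum_congr fun k => hFeq j k
  -- conclude pointwise
  refine Filter.Eventually.of_forall fun ω => ?_
  unfold blup
  have hLHS : ∀ i j : Fin N,
      (M⁻¹ i j * Y i ω) • (∫ ω', Y j ω' • Z ω')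
        = ∑' k, (M⁻¹ i j * Y i ω) * B k (m j k) := by
    intro i j
    rw [hkey j, smul_eq_mul, tsum_mul_left]
  have hRHS : ∀ k : ℤ, B k (∑ i : Fin N, ∑ j : Fin N,
      (M⁻¹ i j * Y i ω) • (∫ ω', Y j ω' • X (s - k) ω'))
        = ∑ i : Fin N, ∑ j : Fin N, (M⁻¹ i j * Y i ω) * B k (m j k) := by
    intro k
    rw [map_sum]
    refine Finset.sum_congr rfl fun i _ => ?_
    rw [map_sum]
    refine Finset.sum_congr rfl fun j _ => ?_
    rw [_root_.map_smul, smul_eq_mul]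
  calc (∑ i : Fin N, ∑ j : Fin N, (M⁻¹ i j * Y i ω) • (∫ ω', Y j ω' • Z ω'))
      = ∑ i : Fin N, ∑ j : Fin N, ∑' k, (M⁻¹ i j * Y i ω) * B k (m j k) := by
        refine Finset.sum_congr rfl fun i _ => Finset.sum_congr rfl fun j _ => hLHS i j
    _ = ∑' k, ∑ i : Fin N, ∑ j : Fin N, (M⁻¹ i j * Y i ω) * B k (m j k) := by
        rw [Summable.tsum_finsetSum fun i _ => ?_]
        · exact Finset.sum_congr rfl fun i _ =>
            (Summable.tsum_finsetSum fun j _ => (hsum j).mul_left _).symm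
        · exact summable_sum fun j _ => (hsum j).mul_left _
    _ = ∑' k, B k (∑ i : Fin N, ∑ j : Fin N,
          (M⁻¹ i j * Y i ω) • (∫ ω', Y j ω' • X (s - k) ω')) :=
        tsum_congr fun k => (hRHS k).symm
end

section
/- Let E be a Banach space, let (a_h)_{h∈ℤ} be a family in E with Σ_{h∈ℤ} |h| ‖a_h‖ < ∞ (hence also Σ_h ‖a_h‖ < ∞), and let L, T be positive integers with L ≤ T. Then ‖ Σ_{h=−L}^{L} (1 − |h|/T)(1 − |h|/L) a_h − Σ_{h∈ℤ} a_h ‖ ≤ (4/L) Σ_{h∈ℤ} |h| ‖a_h‖; in particular the approximation error is O(1/L) as L → ∞. -/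
/-- The rate refinement in the proof of Lemma C.4: if `Σ_h |h|‖a_h‖ < ∞` (hence
also `Σ_h ‖a_h‖ < ∞`), then the Bartlett-weighted partial sums approximate the
full bilateral series at rate `O(1/L)`:
`‖Σ_{|h|≤L} (1-|h|/T)(1-|h|/L) a_h − Σ_h a_h‖ ≤ (4/L) Σ_h |h|‖a_h‖`. -/
theorem bartlett_weight_bound_rate
    {E : Type*} [NormedAddCommGroup E] [NormedSpace ℝ E] [CompleteSpace E]
    (a : ℤ → E) (ha : Summable fun h : ℤ => (|h| : ℝ) * ‖a h‖)
    (L T : ℕ) (hL : 0 < L) (hT : 0 < T) (hLT : L ≤ T) :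
    ‖(∑ h ∈ Finset.Icc (-(L:ℤ)) (L:ℤ),
        ((1 - (|h| : ℝ) / T) * (1 - (|h| : ℝ) / L)) • a h) - ∑' h : ℤ, a h‖
      ≤ (4 / (L:ℝ)) * ∑' h : ℤ, (|h| : ℝ) * ‖a h‖ := by
  set S := ∑' h : ℤ, (|h| : ℝ) * ‖a h‖ with hS
  have hSnn : 0 ≤ S := tsum_nonneg fun h => mul_nonneg (by positivity) (norm_nonneg _)
  have hL' : (0:ℝ) < L := by exact_mod_cast hL
  have hT' : (0:ℝ) < T := by exact_mod_cast hT
  have hLT' : (L:ℝ) ≤ T := by exact_mod_cast hLT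
  have hsum : Summable fun h : ℤ => ‖a h‖ := by
    apply ha.of_norm_bounded_eventually _
    filter_upwards [(Set.finite_singleton (0:ℤ)).compl_mem_cofinite] with h hh
    have hne : h ≠ 0 := hh
    have h1 : (1:ℝ) ≤ |h| := by exact_mod_cast Int.one_le_abs (by omega)
    simpa [abs_of_nonneg (norm_nonneg (a h))] using
      le_mul_of_one_le_left (norm_nonneg (a h)) h1
  have hsa : Summable a := hsum.of_norm
  set s : Finset ℤ := Finset.Icc (-(L:ℤ)) (L:ℤ) with hs
  have key := Summable.sum_add_tsum_subtype_compl hsa s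
  rw [← key]
  have heq : (∑ h ∈ s, ((1 - (|h| : ℝ) / T) * (1 - (|h| : ℝ) / L)) • a h) -
      ((∑ h ∈ s, a h) + ∑' h : {h : ℤ // h ∉ s}, a h)
      = (∑ h ∈ s, (((1 - (|h| : ℝ) / T) * (1 - (|h| : ℝ) / L)) - 1) • a h) -
        ∑' h : {h : ℤ // h ∉ s}, a h := by
    rw [Finset.sum_congr rfl (fun h _ => sub_smul _ 1 (a h)), Finset.sum_sub_distrib]
    simp only [one_smul]
    abel
  rw [heq]
  have hb1 : ‖∑ h ∈ s, (((1 - (|h| : ℝ) / T) * (1 - (|h| : ℝ) / L)) - 1) • a h‖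
      ≤ (2 / L) * S := by
    calc ‖∑ h ∈ s, (((1 - (|h| : ℝ) / T) * (1 - (|h| : ℝ) / L)) - 1) • a h‖
        ≤ ∑ h ∈ s, ‖(((1 - (|h| : ℝ) / T) * (1 - (|h| : ℝ) / L)) - 1) • a h‖ :=
          norm_sum_le _ _
      _ ≤ ∑ h ∈ s, (2 / L) * ((|h| : ℝ) * ‖a h‖) := by
          apply Finset.sum_le_sum
          intro h hh
          rw [norm_smul, Real.norm_eq_abs]
          rw [hs, Finset.mem_Icc] at hh
          have hx0 : (0:ℝ) ≤ (|h| : ℝ) := by positivity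
          have hxL : ((|h| : ℝ)) ≤ (L:ℝ) := by
            have : |h| ≤ (L:ℤ) := abs_le.mpr hh
            exact_mod_cast this
          set x : ℝ := (|h| : ℝ)
          have hu0 : 0 ≤ x / T := by positivity
          have huv : x / T ≤ x / L := div_le_div_of_nonneg_left hx0 hL' hLT'
          have hv1 : x / L ≤ 1 := (div_le_one hL').mpr hxL
          have habs : |(1 - x / T) * (1 - x / L) - 1| ≤ 2 * (x / L) := by
            rw [abs_le]
            have hv0 : 0 ≤ x / L := le_trans hu0 huv
            have h1 : (x / T) * (x / L) ≤ 1 * (x / L) :=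
              mul_le_mul_of_nonneg_right (le_trans huv hv1) hv0
            have h2 : (x / T) * (x / L) ≥ 0 := mul_nonneg hu0 hv0
            constructor <;> nlinarith
          have h2 : (2:ℝ) / L * (x * ‖a h‖) = (2 * (x / L)) * ‖a h‖ := by ring
          rw [h2]
          exact mul_le_mul_of_nonneg_right habs (norm_nonneg _)
      _ = (2 / L) * ∑ h ∈ s, ((|h| : ℝ) * ‖a h‖) := by rw [Finset.mul_sum]
      _ ≤ (2 / L) * S := by
          apply mul_le_mul_of_nonneg_left _ (by positivity)
          exact Summable.sum_le_tsum s (fun h _ => by positivity) ha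
  have hsubn : Summable fun h : {h : ℤ // h ∉ s} => ‖a (h : ℤ)‖ :=
    hsum.subtype {x : ℤ | x ∉ s}
  have hsubm : Summable fun h : {h : ℤ // h ∉ s} => (|(h:ℤ)| : ℝ) * ‖a (h : ℤ)‖ :=
    ha.subtype {x : ℤ | x ∉ s}
  have hb2 : ‖∑' h : {h : ℤ // h ∉ s}, a h‖ ≤ (1 / L) * S := by
    calc ‖∑' h : {h : ℤ // h ∉ s}, a h‖
        ≤ ∑' h : {h : ℤ // h ∉ s}, ‖a (h : ℤ)‖ := norm_tsum_le_tsum_norm hsubn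
      _ ≤ ∑' h : {h : ℤ // h ∉ s}, (1 / L) * ((|(h:ℤ)| : ℝ) * ‖a (h : ℤ)‖) := by
          apply Summable.tsum_le_tsum _ hsubn (hsubm.mul_left _)
          rintro ⟨h, hh⟩
          simp only [hs, Finset.mem_Icc, not_and, not_le] at hh
          have hLh : (L:ℝ) ≤ (|h| : ℝ) := by
            have : (L:ℤ) ≤ |h| := by
              rcases abs_cases h with ⟨he, _⟩ | ⟨he, _⟩ <;> omega
            exact_mod_cast this
          have : (1:ℝ) ≤ (|h| : ℝ) / L := (le_div_iff₀ hL').mpr (by linarith)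
          have := le_mul_of_one_le_left (norm_nonneg (a h)) this
          calc ‖a h‖ ≤ (|h| : ℝ) / L * ‖a h‖ := this
            _ = 1 / L * ((|h| : ℝ) * ‖a h‖) := by ring
      _ = (1 / L) * ∑' h : {h : ℤ // h ∉ s}, ((|(h:ℤ)| : ℝ) * ‖a (h : ℤ)‖) :=
          tsum_mul_left
      _ ≤ (1 / L) * S := by
          apply mul_le_mul_of_nonneg_left _ (by positivity)
          exact Summable.tsum_le_tsum_of_inj Subtype.val Subtype.val_injective
            (fun h _ => by positivity) (fun h => le_refl _) hsubm ha
  calc ‖(∑ h ∈ s, (((1 - (|h| : ℝ) / T) * (1 - (|h| : ℝ) / L)) - 1) • a h) -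
        ∑' h : {h : ℤ // h ∉ s}, a h‖
      ≤ ‖∑ h ∈ s, (((1 - (|h| : ℝ) / T) * (1 - (|h| : ℝ) / L)) - 1) • a h‖ +
        ‖∑' h : {h : ℤ // h ∉ s}, a h‖ := norm_sub_le _ _
    _ ≤ (2 / L) * S + (1 / L) * S := add_le_add hb1 hb2
    _ ≤ (4 / (L:ℝ)) * S := by
        have : (2 / (L:ℝ)) * S + (1 / L) * S = (3 / L) * S := by ring
        rw [this]
        apply mul_le_mul_of_nonneg_right _ hSnn
        gcongr
        norm_num
end

section
/- Let H be a complex Hilbert space, ρ > 0, and let F and F̂ be bounded self-adjoint positive operators on H. Let B : H → ℂ be a continuous linear functional, set C = B ∘ F, and let Ĉ : H → ℂ be any continuous linear functional. Then ‖ Ĉ ∘ (F̂ + ρI)^{-1} − B ‖ ≤ ‖C − Ĉ‖/ρ + ‖Ĉ‖ · ‖F̂ − F‖ / ρ² + ‖ C ∘ (F + ρI)^{-1} − B ‖, where all norms are operator/functional norms. -/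
lemma tikh_inv_norm_le
    {H : Type*} [NormedAddCommGroup H] [InnerProductSpace ℂ H]
    (ρ : ℝ) (hρ : 0 < ρ)
    (F : H →L[ℂ] H) (hFpos : ∀ f : H, 0 ≤ (inner ℂ (F f) f : ℂ).re)
    (Finv : H →L[ℂ] H)
    (h₁ : (F + (ρ : ℂ) • (1 : H →L[ℂ] H)).comp Finv = 1) :
    ‖Finv‖ ≤ 1 / ρ := by
  apply ContinuousLinearMap.opNorm_le_bound _ (by positivity)
  intro x
  set y := Finv x with hy
  have hFy : F y + (ρ : ℂ) • y = x := by
    have := congrArg (fun T : H →L[ℂ] H => T x) h₁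
    simpa [ContinuousLinearMap.comp_apply] using this
  have hinner : (inner ℂ (x : H) y : ℂ).re
      = (inner ℂ (F y) y : ℂ).re + ρ * ‖y‖ ^ 2 := by
    rw [← hFy, inner_add_left, inner_smul_left]
    simp only [Complex.add_re, Complex.mul_re, Complex.conj_ofReal, Complex.ofReal_re,
      Complex.ofReal_im]
    have h1 : ((inner ℂ (y : H) y : ℂ)).re = ‖y‖ ^ 2 := by
      rw [← RCLike.re_to_complex]; exact inner_self_eq_norm_sq y
    have h2 : ((inner ℂ (y : H) y : ℂ)).im = 0 := by
      rw [← RCLike.im_to_complex]; exact inner_self_im y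
    rw [h1, h2]
    ring
  have hb : ρ * ‖y‖ ^ 2 ≤ ‖x‖ * ‖y‖ := by
    have h1 : (inner ℂ (x : H) y : ℂ).re ≤ ‖x‖ * ‖y‖ := by
      calc (inner ℂ (x : H) y : ℂ).re ≤ ‖(inner ℂ (x : H) y : ℂ)‖ := Complex.re_le_norm _
        _ ≤ ‖x‖ * ‖y‖ := norm_inner_le_norm _ _
    nlinarith [hFpos y]
  rcases eq_or_lt_of_le (norm_nonneg y) with h0 | h0
  · rw [← h0]; positivity
  · rw [div_mul_eq_mul_div, le_div_iff₀ hρ]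
    nlinarith



/-- The deterministic error decomposition at the heart of the proof of
Theorem 3.1: with `F`, `F̂` bounded self-adjoint positive operators on a complex
Hilbert space, `ρ > 0` (with two-sided inverses `Finv` of `F + ρI` and `Fhatinv`
of `F̂ + ρI`), `B : H → ℂ` a continuous linear functional, `C = B ∘ F`, and `Ĉ`
any continuous linear functional,
`‖Ĉ ∘ (F̂+ρI)⁻¹ − B‖ ≤ ‖C−Ĉ‖/ρ + ‖Ĉ‖‖F̂−F‖/ρ² + ‖C ∘ (F+ρI)⁻¹ − B‖`. -/
theorem tikhonov_error_decomposition
    {H : Type*} [NormedAddCommGroup H] [InnerProductSpace ℂ H] [CompleteSpace H]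
    (ρ : ℝ) (hρ : 0 < ρ)
    (F Fhat : H →L[ℂ] H)
    (hF : IsSelfAdjoint F) (hFpos : ∀ f : H, 0 ≤ (inner ℂ (F f) f : ℂ).re)
    (hFhat : IsSelfAdjoint Fhat) (hFhatpos : ∀ f : H, 0 ≤ (inner ℂ (Fhat f) f : ℂ).re)
    (Finv Fhatinv : H →L[ℂ] H)
    (hFinv₁ : (F + (ρ : ℂ) • (1 : H →L[ℂ] H)).comp Finv = 1)
    (hFinv₂ : Finv.comp (F + (ρ : ℂ) • (1 : H →L[ℂ] H)) = 1)
    (hFhinv₁ : (Fhat + (ρ : ℂ) • (1 : H →L[ℂ] H)).comp Fhatinv = 1)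
    (hFhinv₂ : Fhatinv.comp (Fhat + (ρ : ℂ) • (1 : H →L[ℂ] H)) = 1)
    (B Chat : H →L[ℂ] ℂ) :
    ‖Chat.comp Fhatinv - B‖
      ≤ ‖B.comp F - Chat‖ / ρ + ‖Chat‖ * ‖Fhat - F‖ / ρ ^ 2
        + ‖(B.comp F).comp Finv - B‖ := by

  set C := B.comp F with hC
  have hFinv : ‖Finv‖ ≤ 1 / ρ := tikh_inv_norm_le ρ hρ F hFpos Finv hFinv₁
  have hFhinv : ‖Fhatinv‖ ≤ 1 / ρ := tikh_inv_norm_le ρ hρ Fhat hFhatpos Fhatinv hFhinv₁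
  -- key operator identity
  have key : Fhatinv - Finv = Finv.comp ((F - Fhat).comp Fhatinv) := by
    have h1 : Finv.comp ((F + (ρ : ℂ) • (1 : H →L[ℂ] H)).comp Fhatinv) = Fhatinv := by
      rw [← ContinuousLinearMap.comp_assoc, hFinv₂, ContinuousLinearMap.one_def,
        ContinuousLinearMap.id_comp]
    have h2 : Finv.comp ((Fhat + (ρ : ℂ) • (1 : H →L[ℂ] H)).comp Fhatinv) = Finv := by
      rw [hFhinv₁]; rfl
    have h3 : (F - Fhat)
        = (F + (ρ : ℂ) • (1 : H →L[ℂ] H)) - (Fhat + (ρ : ℂ) • (1 : H →L[ℂ] H)) := by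
      abel
    rw [h3, ContinuousLinearMap.sub_comp, ContinuousLinearMap.comp_sub, h1, h2]
  have decomp : Chat.comp Fhatinv - B
      = (Chat - C).comp Finv + Chat.comp (Fhatinv - Finv) + (C.comp Finv - B) := by
    rw [ContinuousLinearMap.sub_comp, ContinuousLinearMap.comp_sub]
    abel
  rw [decomp]
  have t1 : ‖(Chat - C).comp Finv‖ ≤ ‖C - Chat‖ / ρ := by
    calc ‖(Chat - C).comp Finv‖ ≤ ‖Chat - C‖ * ‖Finv‖ := ContinuousLinearMap.opNorm_comp_le _ _
      _ ≤ ‖Chat - C‖ * (1 / ρ) := mul_le_mul_of_nonneg_left hFinv (norm_nonneg _)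
      _ = ‖C - Chat‖ / ρ := by rw [norm_sub_rev]; ring
  have t2 : ‖Chat.comp (Fhatinv - Finv)‖ ≤ ‖Chat‖ * ‖Fhat - F‖ / ρ ^ 2 := by
    have hd : ‖Fhatinv - Finv‖ ≤ ‖Fhat - F‖ / ρ ^ 2 := by
      rw [key]
      calc ‖Finv.comp ((F - Fhat).comp Fhatinv)‖
          ≤ ‖Finv‖ * ‖(F - Fhat).comp Fhatinv‖ := ContinuousLinearMap.opNorm_comp_le _ _
        _ ≤ ‖Finv‖ * (‖F - Fhat‖ * ‖Fhatinv‖) := by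
            exact mul_le_mul_of_nonneg_left (ContinuousLinearMap.opNorm_comp_le _ _)
              (norm_nonneg _)
        _ ≤ (1 / ρ) * (‖F - Fhat‖ * (1 / ρ)) := by gcongr
        _ = ‖Fhat - F‖ / ρ ^ 2 := by rw [norm_sub_rev, sq]; ring
    calc ‖Chat.comp (Fhatinv - Finv)‖ ≤ ‖Chat‖ * ‖Fhatinv - Finv‖ :=
          ContinuousLinearMap.opNorm_comp_le _ _
      _ ≤ ‖Chat‖ * (‖Fhat - F‖ / ρ ^ 2) :=
          mul_le_mul_of_nonneg_left hd (norm_nonneg _)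
      _ = ‖Chat‖ * ‖Fhat - F‖ / ρ ^ 2 := by ring
  calc ‖(Chat - C).comp Finv + Chat.comp (Fhatinv - Finv) + (C.comp Finv - B)‖
      ≤ ‖(Chat - C).comp Finv‖ + ‖Chat.comp (Fhatinv - Finv)‖ + ‖C.comp Finv - B‖ :=
        norm_add₃_le
    _ ≤ ‖C - Chat‖ / ρ + ‖Chat‖ * ‖Fhat - F‖ / ρ ^ 2 + ‖C.comp Finv - B‖ := by
        gcongr
    _ = ‖B.comp F - Chat‖ / ρ + ‖Chat‖ * ‖Fhat - F‖ / ρ ^ 2 + ‖(B.comp F).comp Finv - B‖ := by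
        rw [hC]
end

section
/- Let H be a separable complex Hilbert space, (φ_j)_{j∈ℕ} a Hilbert basis of H, (λ_j)_{j∈ℕ} nonnegative reals with sup_j λ_j < ∞, and F the bounded self-adjoint positive operator with F φ_j = λ_j φ_j for all j. Let B : H → ℂ be a continuous linear functional and ρ > 0. Then ‖ B ∘ F ∘ (F + ρI)^{-1} − B ‖² ≤ Σ_{j∈ℕ} ( ρ / (λ_j + ρ) )² |B(φ_j)|², where ‖·‖ is the norm of continuous linear functionals on H and Σ_j |B(φ_j)|² = ‖B‖² < ∞ by Parseval's identity. -/
open scoped InnerProductSpace ENNReal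

/-- Parseval for a continuous linear functional: `∑ ‖L(φ j)‖² = ‖L‖²`, with summability. -/
lemma parseval_functional {H : Type*} [NormedAddCommGroup H] [InnerProductSpace ℂ H]
    [CompleteSpace H] (φ : HilbertBasis ℕ ℂ H) (L : H →L[ℂ] ℂ) :
    (Summable fun j : ℕ => ‖L (φ j)‖ ^ 2) ∧
      (∑' j : ℕ, ‖L (φ j)‖ ^ 2) = ‖L‖ ^ 2 := by
  set v : H := (InnerProductSpace.toDual ℂ H).symm L with hv
  have hLx : ∀ x : H, L x = ⟪v, x⟫_ℂ := by
    intro x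
    rw [hv, InnerProductSpace.toDual_symm_apply]
  have hnorm : ∀ j : ℕ, ‖L (φ j)‖ = ‖(φ.repr v) j‖ := by
    intro j
    rw [hLx, φ.repr_apply_apply, ← inner_conj_symm (φ j) v, RCLike.norm_conj]
  have hmem : Memℓp (fun j => (φ.repr v) j) 2 := (φ.repr v).property
  have htop : (0 : ℝ) < (2 : ℝ≥0∞).toReal := by norm_num
  have hsum : Summable fun j : ℕ => ‖(φ.repr v) j‖ ^ (2 : ℝ≥0∞).toReal :=
    hmem.summable htop
  have h2 : ((2 : ℝ≥0∞).toReal) = (2 : ℝ) := by norm_num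
  have hsum' : Summable fun j : ℕ => ‖(φ.repr v) j‖ ^ 2 := by
    have := hsum
    simp only [h2] at this
    simpa [Real.rpow_natCast] using this
  have hLnorm : ‖L‖ = ‖v‖ := by
    rw [hv]
    exact ((InnerProductSpace.toDual ℂ H).symm.norm_map L).symm
  have hrepr : ‖φ.repr v‖ = ‖v‖ := φ.repr.norm_map v
  have htsum : (∑' j : ℕ, ‖(φ.repr v) j‖ ^ 2) = ‖v‖ ^ 2 := by
    have t := lp.norm_rpow_eq_tsum htop (φ.repr v)
    simp only [h2] at t
    rw [hrepr] at t
    have t2 : ‖v‖ ^ (2 : ℕ) = ∑' i : ℕ, ‖(φ.repr v) i‖ ^ (2 : ℕ) := by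
      simpa [Real.rpow_natCast] using t
    exact t2.symm
  constructor
  · simpa only [hnorm] using hsum'
  · simp only [hnorm, htsum, hLnorm]

/-- The bound (C.12) on the deterministic Tikhonov regularisation bias `𝓢₃` in
the proof of Theorem 3.1: with `F` diagonalised by the Hilbert basis `(φ_j)`
with nonnegative bounded eigenvalues `λ_j`, `ρ > 0` (`Finv` the two-sided
inverse of `F + ρI`), and `B : H → ℂ` a continuous linear functional,
`‖B ∘ F ∘ (F+ρI)⁻¹ − B‖² ≤ Σ_j (ρ/(λ_j+ρ))² |B(φ_j)|²`, where
`Σ_j |B(φ_j)|² = ‖B‖² < ∞` by Parseval's identity. -/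
theorem tikhonov_bias_bound
    {H : Type*} [NormedAddCommGroup H] [InnerProductSpace ℂ H] [CompleteSpace H]
    (φ : HilbertBasis ℕ ℂ H)
    (lam : ℕ → ℝ) (hlam : ∀ j, 0 ≤ lam j) (hbdd : BddAbove (Set.range lam))
    (F : H →L[ℂ] H) (hF : ∀ j, F (φ j) = (lam j : ℂ) • φ j)
    (ρ : ℝ) (hρ : 0 < ρ)
    (Finv : H →L[ℂ] H)
    (hFinv₁ : (F + (ρ : ℂ) • (1 : H →L[ℂ] H)).comp Finv = 1)
    (hFinv₂ : Finv.comp (F + (ρ : ℂ) • (1 : H →L[ℂ] H)) = 1)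
    (B : H →L[ℂ] ℂ) :
    (Summable fun j : ℕ => ‖B (φ j)‖ ^ 2) ∧
    (∑' j : ℕ, ‖B (φ j)‖ ^ 2) = ‖B‖ ^ 2 ∧
    ‖B.comp (F.comp Finv) - B‖ ^ 2
      ≤ ∑' j : ℕ, (ρ / (lam j + ρ)) ^ 2 * ‖B (φ j)‖ ^ 2 := by
  obtain ⟨hBsum, hBeq⟩ := parseval_functional φ B
  refine ⟨hBsum, hBeq, ?_⟩
  set G : H →L[ℂ] ℂ := B.comp (F.comp Finv) - B with hG
  have hpos : ∀ j, (0:ℝ) < lam j + ρ := fun j => by linarith [hlam j]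
  have hFinvφ : ∀ j, Finv (φ j) = ((lam j + ρ : ℝ) : ℂ)⁻¹ • φ j := by
    intro j
    have h1 : (F + (ρ : ℂ) • (1 : H →L[ℂ] H)) (φ j) = ((lam j + ρ : ℝ) : ℂ) • φ j := by
      rw [ContinuousLinearMap.add_apply, hF j, ContinuousLinearMap.smul_apply,
        ContinuousLinearMap.one_apply]
      push_cast
      rw [add_smul]
    have h2 : Finv ((F + (ρ : ℂ) • (1 : H →L[ℂ] H)) (φ j)) = φ j := by
      rw [← ContinuousLinearMap.comp_apply, hFinv₂, ContinuousLinearMap.one_apply]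
    rw [h1, map_smul] at h2
    have hne : ((lam j + ρ : ℝ) : ℂ) ≠ 0 := by
      exact_mod_cast (hpos j).ne'
    calc Finv (φ j) = ((lam j + ρ : ℝ) : ℂ)⁻¹ • (((lam j + ρ : ℝ) : ℂ) • Finv (φ j)) := by
          rw [smul_smul, inv_mul_cancel₀ hne, one_smul]
      _ = ((lam j + ρ : ℝ) : ℂ)⁻¹ • φ j := by rw [h2]
  have hGφ : ∀ j, G (φ j) = ((-ρ / (lam j + ρ) : ℝ) : ℂ) * B (φ j) := by
    intro j
    have hne : ((lam j + ρ : ℝ) : ℂ) ≠ 0 := by exact_mod_cast (hpos j).ne'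
    have hne' : lam j + ρ ≠ 0 := (hpos j).ne'
    have hR : (lam j + ρ)⁻¹ * lam j - 1 = -ρ / (lam j + ρ) := by
      field_simp
      ring
    have key : ((lam j + ρ : ℝ) : ℂ)⁻¹ * ((lam j : ℝ) : ℂ) - 1
        = ((-ρ / (lam j + ρ) : ℝ) : ℂ) := by
      rw [← hR]; push_cast; ring
    have hGj : G (φ j) = B (F (Finv (φ j))) - B (φ j) := by simp [hG]
    rw [hGj, hFinvφ j, map_smul, hF j, map_smul, map_smul, smul_eq_mul, smul_eq_mul,
      ← mul_assoc, ← sub_one_mul, key]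
  have hGnorm : ∀ j, ‖G (φ j)‖ ^ 2 = (ρ / (lam j + ρ)) ^ 2 * ‖B (φ j)‖ ^ 2 := by
    intro j
    rw [hGφ j, norm_mul, mul_pow]
    congr 1
    rw [Complex.norm_real, Real.norm_eq_abs]
    rw [abs_div, abs_neg, abs_of_pos hρ, abs_of_pos (hpos j)]
  obtain ⟨hGsum, hGeq⟩ := parseval_functional φ G
  calc ‖G‖ ^ 2 = ∑' j : ℕ, ‖G (φ j)‖ ^ 2 := hGeq.symm
    _ ≤ ∑' j : ℕ, (ρ / (lam j + ρ)) ^ 2 * ‖B (φ j)‖ ^ 2 :=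
        le_of_eq (tsum_congr hGnorm)
end

section
/- Let H be a separable complex Hilbert space, (φ_j)_{j∈ℕ} a Hilbert basis of H, (λ_j)_{j∈ℕ} strictly positive reals with sup_j λ_j < ∞, and F the bounded self-adjoint positive injective operator with F φ_j = λ_j φ_j for all j. Let B : H → ℂ be a continuous linear functional. Then ‖ B ∘ F ∘ (F + ρI)^{-1} − B ‖ → 0 as ρ → 0⁺ (limit along positive ρ tending to 0), where ‖·‖ is the norm of continuous linear functionals on H. -/
open scoped ComplexConjugate
open ContinuousLinearMap

local notation "⟪" x ", " y "⟫" => @inner ℂ _ _ x y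

lemma hasSum_norm_sq_inner {H : Type*} [NormedAddCommGroup H] [InnerProductSpace ℂ H]
    [CompleteSpace H] (φ : HilbertBasis ℕ ℂ H) (x : H) :
    HasSum (fun j => ‖⟪φ j, x⟫‖ ^ 2) (‖x‖ ^ 2) := by
  have h := φ.hasSum_inner_mul_inner x x
  have h2 : HasSum (fun j => ((‖⟪φ j, x⟫‖ ^ 2 : ℝ) : ℂ)) ⟪x, x⟫ := by
    refine h.congr_fun fun j => ?_
    rw [← inner_conj_symm x (φ j), RCLike.conj_mul]
    norm_num
  have h3 := h2.mapL Complex.reCLM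
  have h4 : Complex.reCLM ⟪x, x⟫ = ‖x‖ ^ 2 := by
    simpa using inner_self_eq_norm_sq (𝕜 := ℂ) x
  rw [h4] at h3
  exact h3.congr_fun fun j => by simp only [Complex.reCLM_apply, Complex.ofReal_re]


/-- Convergence of the deterministic Tikhonov regularisation bias `𝓢₃` to zero,
concluding the proof of Theorem 3.1: with `F` the bounded self-adjoint positive
injective operator diagonalised by the Hilbert basis `(φ_j)` with strictly
positive bounded eigenvalues `λ_j` (and `Finv ρ` the two-sided inverse of
`F + ρI` for each `ρ > 0`), and `B : H → ℂ` a continuous linear functional,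
`‖B ∘ F ∘ (F+ρI)⁻¹ − B‖ → 0` as `ρ → 0⁺`. -/
theorem tikhonov_bias_tendsto_zero
    {H : Type*} [NormedAddCommGroup H] [InnerProductSpace ℂ H] [CompleteSpace H]
    (φ : HilbertBasis ℕ ℂ H)
    (lam : ℕ → ℝ) (hlam : ∀ j, 0 < lam j) (hbdd : BddAbove (Set.range lam))
    (F : H →L[ℂ] H) (hF : ∀ j, F (φ j) = (lam j : ℂ) • φ j)
    (Finv : ℝ → H →L[ℂ] H)
    (hFinv₁ : ∀ ρ : ℝ, 0 < ρ → (F + (ρ : ℂ) • (1 : H →L[ℂ] H)).comp (Finv ρ) = 1)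
    (hFinv₂ : ∀ ρ : ℝ, 0 < ρ → (Finv ρ).comp (F + (ρ : ℂ) • (1 : H →L[ℂ] H)) = 1)
    (B : H →L[ℂ] ℂ) :
    Filter.Tendsto (fun ρ : ℝ => ‖B.comp (F.comp (Finv ρ)) - B‖)
      (nhdsWithin 0 (Set.Ioi 0)) (nhds 0) := by
  have hdense : Dense ((Submodule.span ℂ (Set.range φ) : Submodule ℂ H) : Set H) :=
    Submodule.dense_iff_topologicalClosure_eq_top.mpr φ.dense_span
  have horth := φ.orthonormal
  rw [orthonormal_iff_ite] at horth
  -- F is self-adjoint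
  have hFadj : ContinuousLinearMap.adjoint F = F := by
    refine ContinuousLinearMap.ext_on hdense ?_
    rintro _ ⟨j, rfl⟩
    have h1 : innerSL ℂ (ContinuousLinearMap.adjoint F (φ j))
        = innerSL ℂ (F (φ j)) := by
      refine ContinuousLinearMap.ext_on hdense ?_
      rintro _ ⟨i, rfl⟩
      simp only [innerSL_apply_apply, ContinuousLinearMap.adjoint_inner_left, hF,
        inner_smul_left, inner_smul_right, horth]
      by_cases h : j = i <;> simp [h]
    have := congrFun (congrArg DFunLike.coe h1)
    exact ext_inner_right ℂ fun v => by simpa using this v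
  -- F + ρ is self-adjoint
  have hAadj : ∀ ρ : ℝ, ContinuousLinearMap.adjoint
      (F + (ρ : ℂ) • (1 : H →L[ℂ] H)) = F + (ρ : ℂ) • (1 : H →L[ℂ] H) := by
    intro ρ
    refine (((F + (ρ : ℂ) • (1 : H →L[ℂ] H)).eq_adjoint_iff _).mpr fun x y => ?_).symm
    have hFxy : ⟪F x, y⟫ = ⟪x, F y⟫ := by
      conv_lhs => rw [← hFadj]
      rw [ContinuousLinearMap.adjoint_inner_left]
    simp only [ContinuousLinearMap.add_apply, ContinuousLinearMap.smul_apply,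
      ContinuousLinearMap.one_apply, inner_add_left, inner_add_right, hFxy]
    rw [inner_smul_left, inner_smul_right, Complex.conj_ofReal]
  -- Finv is self-adjoint
  have hIadj : ∀ ρ : ℝ, 0 < ρ →
      ContinuousLinearMap.adjoint (Finv ρ) = Finv ρ := by
    intro ρ hρ
    set A := F + (ρ : ℂ) • (1 : H →L[ℂ] H) with hA
    have h1 : (ContinuousLinearMap.adjoint (Finv ρ)).comp A = 1 := by
      have h := congrArg ContinuousLinearMap.adjoint (hFinv₁ ρ hρ)
      rwa [ContinuousLinearMap.adjoint_comp, hAadj ρ, ContinuousLinearMap.one_def,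
        ContinuousLinearMap.adjoint_id, ← ContinuousLinearMap.one_def] at h
    calc ContinuousLinearMap.adjoint (Finv ρ)
        = (ContinuousLinearMap.adjoint (Finv ρ)).comp (A.comp (Finv ρ)) := by
          rw [hFinv₁ ρ hρ]; rfl
      _ = ((ContinuousLinearMap.adjoint (Finv ρ)).comp A).comp (Finv ρ) := by
          rw [ContinuousLinearMap.comp_assoc]
      _ = Finv ρ := by rw [h1]; rfl
  -- eigenvectors of Finv
  have hEig : ∀ ρ : ℝ, 0 < ρ → ∀ j, Finv ρ (φ j) = ((lam j : ℂ) + ρ)⁻¹ • φ j := by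
    intro ρ hρ j
    have hne : ((lam j : ℂ) + ρ) ≠ 0 := by
      rw [← Complex.ofReal_add]
      exact_mod_cast ne_of_gt (by linarith [hlam j] : (0:ℝ) < lam j + ρ)
    have h := congrFun (congrArg DFunLike.coe (hFinv₂ ρ hρ)) (φ j)
    simp only [ContinuousLinearMap.coe_comp', Function.comp_apply,
      ContinuousLinearMap.add_apply, ContinuousLinearMap.smul_apply,
      ContinuousLinearMap.one_apply, ContinuousLinearMap.one_def,
      ContinuousLinearMap.id_apply] at h
    rw [hF j, ← add_smul, map_smul] at h
    exact ((inv_smul_eq_iff₀ hne).mpr h.symm).symm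
  -- the Riesz representative of B
  set b : H := (InnerProductSpace.toDual ℂ H).symm B with hbdef
  have hb : ∀ x, ⟪b, x⟫ = B x := fun x => InnerProductSpace.toDual_symm_apply
  -- the key norm identity
  have key : ∀ ρ : ℝ, 0 < ρ → ‖B.comp (F.comp (Finv ρ)) - B‖
      = Real.sqrt (∑' j, (ρ / (lam j + ρ)) ^ 2 * ‖⟪φ j, b⟫‖ ^ 2) := by
    intro ρ hρ
    set g : H := (ρ : ℂ) • (Finv ρ b) with hg
    have hcomp : F.comp (Finv ρ) = 1 - (ρ : ℂ) • (Finv ρ) := by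
      have h := hFinv₁ ρ hρ
      rw [ContinuousLinearMap.add_comp, ContinuousLinearMap.smul_comp,
        ContinuousLinearMap.one_def, ContinuousLinearMap.id_comp] at h
      exact eq_sub_of_add_eq h
    have hBg : B.comp ((ρ : ℂ) • Finv ρ) = innerSL ℂ g := by
      ext x
      have h1 : ⟪Finv ρ b, x⟫ = ⟪b, Finv ρ x⟫ := by
        conv_lhs => rw [← hIadj ρ hρ]
        rw [ContinuousLinearMap.adjoint_inner_left]
      simp only [ContinuousLinearMap.coe_comp', Function.comp_apply,
        ContinuousLinearMap.smul_apply, innerSL_apply_apply, hg, map_smul,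
        inner_smul_left, Complex.conj_ofReal, h1, hb, smul_eq_mul]
    have hS : B.comp (F.comp (Finv ρ)) - B = -(innerSL ℂ g) := by
      rw [hcomp, ContinuousLinearMap.comp_sub, ContinuousLinearMap.one_def,
        ContinuousLinearMap.comp_id, hBg, sub_sub_cancel_left]
    have hcoef : ∀ j, ‖⟪φ j, g⟫‖ ^ 2 = (ρ / (lam j + ρ)) ^ 2 * ‖⟪φ j, b⟫‖ ^ 2 := by
      intro j
      have h1 : ⟪φ j, Finv ρ b⟫ = ((lam j : ℂ) + ρ)⁻¹ * ⟪φ j, b⟫ := by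
        conv_lhs => rw [← ContinuousLinearMap.adjoint_inner_left, hIadj ρ hρ]
        rw [hEig ρ hρ j, inner_smul_left, ← Complex.ofReal_add, ← Complex.ofReal_inv,
          Complex.conj_ofReal]
      have h2 : ⟪φ j, g⟫ = (ρ : ℂ) * (((lam j : ℂ) + ρ)⁻¹ * ⟪φ j, b⟫) := by
        rw [hg, inner_smul_right, h1]
      have hpos : (0:ℝ) < lam j + ρ := by linarith [hlam j]
      rw [h2]
      rw [norm_mul, norm_mul, ← Complex.ofReal_add, ← Complex.ofReal_inv]
      simp only [Complex.norm_real, Real.norm_eq_abs]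
      rw [abs_of_pos hρ, abs_of_pos (inv_pos.mpr hpos)]
      rw [div_eq_mul_inv]
      ring
    have hsum : HasSum (fun j => (ρ / (lam j + ρ)) ^ 2 * ‖⟪φ j, b⟫‖ ^ 2) (‖g‖ ^ 2) :=
      (hasSum_norm_sq_inner φ g).congr_fun fun j => (hcoef j).symm
    rw [hS, norm_neg, innerSL_apply_norm, hsum.tsum_eq, Real.sqrt_sq (norm_nonneg g)]
  -- dominated convergence
  have hsum_b : Summable fun j => ‖⟪φ j, b⟫‖ ^ 2 := (hasSum_norm_sq_inner φ b).summable
  have hptwise : ∀ j, Filter.Tendsto (fun ρ : ℝ => (ρ / (lam j + ρ)) ^ 2 * ‖⟪φ j, b⟫‖ ^ 2)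
      (nhdsWithin 0 (Set.Ioi 0)) (nhds 0) := by
    intro j
    have hc : ContinuousAt (fun ρ : ℝ => (ρ / (lam j + ρ)) ^ 2 * ‖⟪φ j, b⟫‖ ^ 2) 0 := by
      have hden : (fun ρ : ℝ => lam j + ρ) 0 ≠ 0 := by simpa using (hlam j).ne'
      exact (((continuousAt_id.div ((continuousAt_const).add continuousAt_id) hden).pow 2).mul
        continuousAt_const)
    have h0 : (fun ρ : ℝ => (ρ / (lam j + ρ)) ^ 2 * ‖⟪φ j, b⟫‖ ^ 2) 0 = 0 := by simp
    simpa [h0] using (hc.tendsto.mono_left nhdsWithin_le_nhds)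
  have hbound : ∀ᶠ ρ : ℝ in nhdsWithin 0 (Set.Ioi 0),
      ∀ j, ‖(ρ / (lam j + ρ)) ^ 2 * ‖⟪φ j, b⟫‖ ^ 2‖ ≤ ‖⟪φ j, b⟫‖ ^ 2 := by
    filter_upwards [self_mem_nhdsWithin] with ρ hρ j
    have hρ' : (0:ℝ) < ρ := hρ
    have hpos : (0:ℝ) < lam j + ρ := by linarith [hlam j]
    have h1 : ρ / (lam j + ρ) ≤ 1 := (div_le_one hpos).mpr (by linarith [hlam j])
    have h2 : (0:ℝ) ≤ ρ / (lam j + ρ) := by positivity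
    rw [Real.norm_eq_abs, abs_of_nonneg (by positivity)]
    calc (ρ / (lam j + ρ)) ^ 2 * ‖⟪φ j, b⟫‖ ^ 2
        ≤ 1 * ‖⟪φ j, b⟫‖ ^ 2 :=
          mul_le_mul_of_nonneg_right (pow_le_one₀ h2 h1) (by positivity)
      _ = ‖⟪φ j, b⟫‖ ^ 2 := one_mul _
  have ht : Filter.Tendsto (fun ρ : ℝ => ∑' j, (ρ / (lam j + ρ)) ^ 2 * ‖⟪φ j, b⟫‖ ^ 2)
      (nhdsWithin 0 (Set.Ioi 0)) (nhds 0) := by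
    have := tendsto_tsum_of_dominated_convergence (g := fun _ : ℕ => (0:ℝ)) hsum_b hptwise hbound
    simpa using this
  have hsqrt : Filter.Tendsto
      (fun ρ : ℝ => Real.sqrt (∑' j, (ρ / (lam j + ρ)) ^ 2 * ‖⟪φ j, b⟫‖ ^ 2))
      (nhdsWithin 0 (Set.Ioi 0)) (nhds 0) := by
    have := (Real.continuous_sqrt.tendsto 0).comp ht
    simpa [Function.comp_def] using this
  refine hsqrt.congr' ?_
  filter_upwards [self_mem_nhdsWithin] with ρ hρ
  exact (key ρ hρ).symm
end
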